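/- Let A be a C*-algebra and let ω be a free ultrafilter on ℕ. Let (f_n)_{n∈ℕ} be a family of elements of ℓ∞(A) such that each f_n is a positive contraction (0 ≤ f_n(k) ≤ 1 for all k), f_n(k) f_m(k) = 0 for all k whenever n ≠ m, and lim_ω ‖f_n(k) − f_n(k)²‖ = 0 for each n. Then there exists a family (p_n)_{n∈ℕ} of elements of ℓ∞(A) such that each p_n(k) is a projection in A, p_n(k) p_m(k) = 0 for all k whenever n ≠ m, and lim_ω ‖p_n(k) − f_n(k)‖ = 0 for each n. -/

import Mathlib

open Filter Topology

/-- A projection in a C*-algebra: a self-adjoint idempotent. -/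
def IsProjection {A : Type*} [Mul A] [Star A] (p : A) : Prop :=
  star p = p ∧ p * p = p

/-- The step-like function used to build projections from approximate projections. -/
noncomputable def gfun : ℝ → ℝ := fun t => min 1 (max 0 (2 * t - 1/2))

lemma gfun_continuous : Continuous gfun := by
  unfold gfun; fun_prop

lemma gfun_zero : gfun 0 = 0 := by norm_num [gfun]

lemma gfun_eq_zero {t : ℝ} (ht : t ≤ 1/4) : gfun t = 0 := by
  unfold gfun
  rw [max_eq_left (by linarith : 2 * t - 1/2 ≤ 0)]
  exact min_eq_right zero_le_one

lemma gfun_eq_one {t : ℝ} (ht : 3/4 ≤ t) : gfun t = 1 := by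
  unfold gfun
  rw [max_eq_right (by linarith : (0:ℝ) ≤ 2 * t - 1/2)]
  exact min_eq_left (by linarith)

section Aux

variable {A : Type*} [CStarAlgebra A] [PartialOrder A] [StarOrderedRing A]

open scoped ContinuousMapZero

/-- Left orthogonality is preserved by the non-unital continuous functional calculus. -/
lemma cfcn_mul_eq_zero {a x : A} (ha : IsSelfAdjoint a)
    {g : ℝ → ℝ} (hg : Continuous g) (hg0 : g 0 = 0) (hx : a * x = 0) :
    cfcₙ g a * x = 0 := by
  rw [cfcₙ_apply g a hg.continuousOn hg0 ha]
  refine ContinuousMapZero.nonUnitalStarAlgHom_apply_mul_eq_zero (cfcₙHom ha) x ?_ ?_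
    (cfcₙHom_continuous ha) _
  · rw [cfcₙHom_id ha]
    exact hx
  · rw [star_trivial, cfcₙHom_id ha]
    exact hx

/-- Right orthogonality is preserved by the non-unital continuous functional calculus. -/
lemma mul_cfcn_eq_zero {b x : A} (hb : IsSelfAdjoint b)
    {g : ℝ → ℝ} (hg : Continuous g) (hg0 : g 0 = 0) (hx : x * b = 0) :
    x * cfcₙ g b = 0 := by
  rw [cfcₙ_apply g b hg.continuousOn hg0 hb]
  refine ContinuousMapZero.mul_nonUnitalStarAlgHom_apply_eq_zero (cfcₙHom hb) x ?_ ?_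
    (cfcₙHom_continuous hb) _
  · rw [cfcₙHom_id hb]
    exact hx
  · rw [star_trivial, cfcₙHom_id hb]
    exact hx

end Aux

/-- Along a free ultrafilter, a family of pairwise orthogonal positive contractions in
`ℓ∞(A)` which are approximately idempotent can be lifted to a family of pairwise
orthogonal projections in `ℓ∞(A)` at distance zero along the ultrafilter. -/
theorem exists_orthogonal_projection_lift
    {A : Type*} [CStarAlgebra A] [PartialOrder A] [StarOrderedRing A]
    (ω : Ultrafilter ℕ) (hω : Filter.cofinite ≤ (ω : Filter ℕ))
    (f : ℕ → ℕ → A)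
    (hpos : ∀ n k, 0 ≤ f n k) (hcontr : ∀ n k, f n k ≤ 1)
    (horth : ∀ n m, n ≠ m → ∀ k, f n k * f m k = 0)
    (hidem : ∀ n, Filter.Tendsto (fun k => ‖f n k - f n k * f n k‖) (ω : Filter ℕ)
      (nhds (0 : ℝ))) :
    ∃ p : ℕ → ℕ → A,
      (∀ n k, IsProjection (p n k)) ∧
      (∀ n m, n ≠ m → ∀ k, p n k * p m k = 0) ∧
      (∀ n, Filter.Tendsto (fun k => ‖p n k - f n k‖) (ω : Filter ℕ) (nhds (0 : ℝ))) := by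
  classical
  have hsa : ∀ n k, IsSelfAdjoint (f n k) := fun n k => .of_nonneg (hpos n k)
  -- key spectral estimate
  have hkey : ∀ n k, ∀ t ∈ quasispectrum ℝ (f n k),
      |t - t * t| ≤ ‖f n k - f n k * f n k‖ ∧ 0 ≤ t ∧ t ≤ 1 := by
    intro n k t ht
    set a := f n k with ha_def
    have h1 : cfcₙ (fun t : ℝ => t - t * t) a = a - a * a := by
      rw [cfcₙ_sub (fun t : ℝ => t) (fun t : ℝ => t * t) a (by fun_prop) (by norm_num)
          (by fun_prop) (by norm_num),
        cfcₙ_mul (fun t : ℝ => t) (fun t : ℝ => t) a (by fun_prop) (by norm_num)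
          (by fun_prop) (by norm_num), cfcₙ_id' ℝ a]
    have h2 : |t - t * t| ≤ ‖a - a * a‖ := by
      calc |t - t * t| = ‖(fun t : ℝ => t - t * t) t‖ := rfl
        _ ≤ ‖cfcₙ (fun t : ℝ => t - t * t) a‖ :=
          norm_apply_le_norm_cfcₙ (fun t : ℝ => t - t * t) a ht (by fun_prop) (by norm_num) (hsa n k)
        _ = ‖a - a * a‖ := by rw [h1]
    have h3 : 0 ≤ t := quasispectrum_nonneg_of_nonneg a (hpos n k) t ht
    have h4 : t ≤ 1 := by
      have h5 : |t| ≤ ‖a‖ := by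
        calc |t| = ‖(fun t : ℝ => t) t‖ := rfl
          _ ≤ ‖cfcₙ (fun t : ℝ => t) a‖ :=
            norm_apply_le_norm_cfcₙ (fun t : ℝ => t) a ht (by fun_prop) (by norm_num)
            (hsa n k)
          _ = ‖a‖ := by rw [cfcₙ_id' ℝ a]
      have h6 : ‖a‖ ≤ 1 :=
        (CStarAlgebra.norm_le_one_iff_of_nonneg a (hpos n k)).mpr (hcontr n k)
      calc t ≤ |t| := le_abs_self t
        _ ≤ 1 := h5.trans h6
    exact ⟨h2, h3, h4⟩
  -- the spectrum avoids the middle interval when the defect is small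
  have hgap : ∀ n k, ‖f n k - f n k * f n k‖ ≤ 1/8 →
      ∀ t ∈ quasispectrum ℝ (f n k), t ≤ 1/4 ∨ 3/4 ≤ t := by
    intro n k hε t ht
    obtain ⟨h2, h3, _⟩ := hkey n k t ht
    by_contra hcon
    push_neg at hcon
    obtain ⟨hl, hr⟩ := hcon
    have := abs_le.mp h2
    nlinarith [this.2]
  refine ⟨fun n k => if ‖f n k - f n k * f n k‖ ≤ 1/8 then cfcₙ gfun (f n k) else 0,
    ?_, ?_, ?_⟩
  · -- projections
    intro n k
    by_cases h : ‖f n k - f n k * f n k‖ ≤ 1/8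
    · simp only [if_pos h]
      constructor
      · exact (cfcₙ_predicate gfun (f n k)).star_eq
      · rw [← cfcₙ_mul gfun gfun (f n k) (gfun_continuous.continuousOn) gfun_zero
          (gfun_continuous.continuousOn) gfun_zero]
        refine cfcₙ_congr fun t ht => ?_
        rcases hgap n k h t ht with h1 | h1
        · simp [gfun_eq_zero h1]
        · simp [gfun_eq_one h1]
    · simp only [if_neg h]
      exact ⟨star_zero A, mul_zero 0⟩
  · -- orthogonality
    intro n m hnm k
    by_cases h1 : ‖f n k - f n k * f n k‖ ≤ 1/8 <;>
      by_cases h2 : ‖f m k - f m k * f m k‖ ≤ 1/8 <;>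
      simp only [if_pos, if_neg, h1, h2, zero_mul, mul_zero, if_true, if_false]
    exact cfcn_mul_eq_zero (hsa n k) gfun_continuous gfun_zero
      (mul_cfcn_eq_zero (hsa m k) gfun_continuous gfun_zero (horth n m hnm k))
  · -- convergence
    intro n
    have hev : ∀ᶠ k in (ω : Filter ℕ), ‖f n k - f n k * f n k‖ ≤ 1/8 :=
      (hidem n).eventually (eventually_le_nhds (by norm_num : (0:ℝ) < 1/8))
    refine squeeze_zero' (Eventually.of_forall fun k => norm_nonneg _)
      (hev.mono fun k hk => ?_) (by simpa using (hidem n).const_mul (4/3))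
    simp only [if_pos hk]
    set a := f n k with ha_def
    have h1 : cfcₙ (fun t => gfun t - t) a = cfcₙ gfun a - a := by
      rw [cfcₙ_sub gfun (fun t : ℝ => t) a (gfun_continuous.continuousOn) gfun_zero
        (by fun_prop) (by norm_num), cfcₙ_id' ℝ a]
    rw [← h1]
    refine norm_cfcₙ_le fun t ht => ?_
    obtain ⟨h2, h3, h4⟩ := hkey n k t ht
    have habs := abs_le.mp h2
    rcases hgap n k hk t ht with h5 | h5
    · rw [gfun_eq_zero h5]
      rw [Real.norm_eq_abs, abs_le]
      constructor
      · have : |t - t*t| ≤ ‖a - a * a‖ := h2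
        nlinarith [abs_nonneg (t - t*t), habs.2]
      · nlinarith [norm_nonneg (a - a * a)]
    · rw [gfun_eq_one h5]
      rw [Real.norm_eq_abs, abs_le]
      constructor
      · nlinarith [habs.2]
      · nlinarith [norm_nonneg (a - a * a)]
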